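/- Let p be a prime, let ν be a nonnegative integer with 2ν < p, let k = p, and let n be a positive integer. Then W_n(ν; 2k) ≡ n (mod p), i.e., the p-adic valuation of the rational number W_n(ν;2p) − n is at least 1. -/

import Mathlib

open Finset

lemma not_sq_dvd_fact {p m : ℕ} (hp : p.Prime) (hm : m < 2 * p) :
    ¬ (p * p) ∣ m.factorial := by
  have h2 := hp.two_le
  rcases Nat.eq_zero_or_pos m with h0 | h0
  · subst h0
    intro h
    have := Nat.le_of_dvd Nat.one_pos (by simpa [Nat.factorial] using h)
    nlinarith
  · have hlog : Nat.log p m < 2 := Nat.log_lt_of_lt_pow h0.ne' (by nlinarith)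
    intro h
    rw [← pow_two] at h
    rw [Nat.Prime.pow_dvd_factorial_iff hp hlog] at h
    have he : ∑ i ∈ Finset.Ico 1 2, m / p ^ i = m / p := by simp
    rw [he] at h
    have : m / p < 2 := (Nat.div_lt_iff_lt_mul hp.pos).mpr (by omega)
    omega

lemma term_padic {p ν n : ℕ} (hp : p.Prime) (hν : 2 * ν < p) (f : Fin n → ℕ)
    (hsum : ∑ i, f i = p) (hne : ∀ i, f i ≠ p) :
    ∃ a b : ℤ, ¬ (p : ℤ) ∣ b ∧
      ((p.factorial : ℚ) * ((p + ν).factorial : ℚ) * ((ν.factorial : ℚ)) ^ (n - 1)) /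
        ((∏ i, ((f i).factorial : ℚ)) * ∏ i, ((f i + ν).factorial : ℚ))
        = (p : ℚ) * ((a : ℚ) / (b : ℚ)) := by
  have h2 := hp.two_le
  have hlt : ∀ i, f i < p := by
    intro i
    have hle : f i ≤ p := hsum ▸ Finset.single_le_sum (fun j _ => Nat.zero_le _) (mem_univ i)
    exact lt_of_le_of_ne hle (hne i)
  -- the numerator and denominator as naturals
  set Anat := p.factorial * (p + ν).factorial * ν.factorial ^ (n - 1) with hAdef
  set Bnat := (∏ i, (f i).factorial) * ∏ i, (f i + ν).factorial with hBdef
  have hA : p * p ∣ Anat :=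
    Dvd.dvd.mul_right (mul_dvd_mul ((hp.dvd_factorial).mpr le_rfl)
      ((hp.dvd_factorial).mpr (Nat.le_add_right p ν))) _
  -- at most one heavy index
  have hT : ∀ i j, p ≤ f i + ν → p ≤ f j + ν → i = j := by
    intro i j hi hj
    by_contra hij
    have h1 : f i + f j ≤ ∑ k, f k := by
      rw [← Finset.sum_erase_add univ f (mem_univ i)]
      have : f j ≤ ∑ k ∈ univ.erase i, f k :=
        Finset.single_le_sum (fun k _ => Nat.zero_le _)
          (Finset.mem_erase.mpr ⟨fun h => hij h.symm, mem_univ j⟩)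
      omega
    omega
  have hB1 : ¬ p ∣ ∏ i, (f i).factorial := by
    rw [Prime.dvd_finset_prod_iff hp.prime]
    rintro ⟨i, -, hd⟩
    exact absurd ((hp.dvd_factorial).mp hd) (by have := hlt i; omega)
  have hB2 : ¬ p * p ∣ ∏ i, (f i + ν).factorial := by
    by_cases hheavy : ∃ i, p ≤ f i + ν
    · obtain ⟨i, hi⟩ := hheavy
      rw [← Finset.mul_prod_erase univ _ (mem_univ i)]
      intro hdvd
      have hrest : ¬ p ∣ ∏ j ∈ univ.erase i, (f j + ν).factorial := by
        rw [Prime.dvd_finset_prod_iff hp.prime]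
        rintro ⟨j, hj, hdj⟩
        exact (Finset.mem_erase.mp hj).1 (hT j i ((hp.dvd_factorial).mp hdj) hi)
      have hcop : Nat.Coprime (p * p) (∏ j ∈ univ.erase i, (f j + ν).factorial) :=
        Nat.Coprime.mul (hp.coprime_iff_not_dvd.mpr hrest)
          (hp.coprime_iff_not_dvd.mpr hrest)
      have hdd : p * p ∣ (f i + ν).factorial := hcop.dvd_of_dvd_mul_right hdvd
      exact not_sq_dvd_fact hp (by have := hlt i; omega) hdd
    · push_neg at hheavy
      intro hdvd
      have hp1 : p ∣ ∏ i, (f i + ν).factorial := (dvd_mul_right p p).trans hdvd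
      rw [Prime.dvd_finset_prod_iff hp.prime] at hp1
      obtain ⟨i, -, hd⟩ := hp1
      exact absurd ((hp.dvd_factorial).mp hd) (by have := hheavy i; omega)
  have hB : ¬ p * p ∣ Bnat := by
    intro h
    have hcop : Nat.Coprime (p * p) (∏ i, (f i).factorial) :=
      Nat.Coprime.mul (hp.coprime_iff_not_dvd.mpr hB1)
        (hp.coprime_iff_not_dvd.mpr hB1)
    exact hB2 (hcop.dvd_of_dvd_mul_left h)
  have hBpos : 0 < Bnat :=
    Nat.mul_pos (Finset.prod_pos fun i _ => Nat.factorial_pos _)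
      (Finset.prod_pos fun i _ => Nat.factorial_pos _)
  have hppos : (0:ℚ) < p := by exact_mod_cast hp.pos
  -- the term equals Anat / Bnat as rationals
  have hterm : ((p.factorial : ℚ) * ((p + ν).factorial : ℚ) * ((ν.factorial : ℚ)) ^ (n - 1)) /
        ((∏ i, ((f i).factorial : ℚ)) * ∏ i, ((f i + ν).factorial : ℚ))
      = (Anat : ℚ) / (Bnat : ℚ) := by
    rw [hAdef, hBdef]; push_cast; ring
  by_cases hpd : p ∣ Bnat
  · -- B = p * B', A = p*p*A'
    obtain ⟨B', hB'⟩ := hpd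
    obtain ⟨A', hA'⟩ := hA
    have hpB' : ¬ p ∣ B' := fun h => hB (hB' ▸ mul_dvd_mul_left p (h))
    refine ⟨(A' : ℤ), (B' : ℤ), ?_, ?_⟩
    · rw [Int.natCast_dvd_natCast]; exact hpB'
    · have hB'0 : (B' : ℚ) ≠ 0 := by
        have : B' ≠ 0 := by rintro rfl; simp [hB'] at hBpos
        exact_mod_cast this
      rw [hterm, hA', hB']
      push_cast
      field_simp
  · obtain ⟨A', hA'⟩ : p ∣ Anat := (dvd_mul_right p p).trans hA
    refine ⟨(A' : ℤ), (Bnat : ℤ), ?_, ?_⟩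
    · rw [Int.natCast_dvd_natCast]; exact hpd
    · have hB0 : (Bnat : ℚ) ≠ 0 := by exact_mod_cast hBpos.ne'
      rw [hterm, hA']
      push_cast
      field_simp

/-- `W n ν k` is the `2k`-th moment `W_n(ν; 2k)`, given as a sum over all `n`-tuples of
nonnegative integers summing to `k`. -/
def W (n ν k : ℕ) : ℚ :=
  ∑ f ∈ Finset.Nat.antidiagonalTuple n k,
    ((k.factorial : ℚ) * ((k + ν).factorial : ℚ) * ((ν.factorial : ℚ)) ^ (n - 1)) /
      ((∏ i, ((f i).factorial : ℚ)) * ∏ i, ((f i + ν).factorial : ℚ))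

open Finset

/-- If `p` is prime, `2ν < p` and `k = p`, then `W_n(ν;2k) ≡ n (mod p)`: the difference
`W_n(ν;2p) − n` can be written as `p·(a/b)` with `p ∤ b`. -/
theorem stmt8 (p : ℕ) (hp : p.Prime) (ν : ℕ) (hν : 2 * ν < p) (n : ℕ) (hn : 0 < n) :
    ∃ a b : ℤ, ¬ (p : ℤ) ∣ b ∧ W n ν p - (n : ℚ) = (p : ℚ) * ((a : ℚ) / (b : ℚ)) := by
  classical
  have h2 := hp.two_le
  set t : (Fin n → ℕ) → ℚ := fun f =>
    ((p.factorial : ℚ) * ((p + ν).factorial : ℚ) * ((ν.factorial : ℚ)) ^ (n - 1)) /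
      ((∏ i, ((f i).factorial : ℚ)) * ∏ i, ((f i + ν).factorial : ℚ)) with ht
  set S := Finset.Nat.antidiagonalTuple n p with hSdef
  have hW : W n ν p = ∑ f ∈ S, t f := rfl
  have hinj : Function.Injective (fun i : Fin n => (Pi.single i p : Fin n → ℕ)) := by
    intro i j hij
    by_contra hne
    have := congrFun hij i
    simp [Pi.single_eq_same, Pi.single_eq_of_ne hne] at this
    omega
  have hfilter : S.filter (fun f => ∃ i, f i = p)
      = Finset.image (fun i : Fin n => (Pi.single i p : Fin n → ℕ)) Finset.univ := by
    ext f
    simp only [Finset.mem_filter, Finset.mem_image, Finset.mem_univ, true_and, hSdef,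
      Finset.Nat.mem_antidiagonalTuple]
    constructor
    · rintro ⟨hsum, i, hi⟩
      refine ⟨i, ?_⟩
      funext j
      by_cases hj : j = i
      · subst hj; simp [Pi.single_eq_same, hi]
      · have hfj : f j = 0 := by
          by_contra hfj
          have h1 : f i + f j ≤ ∑ k, f k := by
            rw [← Finset.sum_erase_add univ f (mem_univ i)]
            have : f j ≤ ∑ k ∈ univ.erase i, f k :=
              Finset.single_le_sum (fun k _ => Nat.zero_le _)
                (Finset.mem_erase.mpr ⟨hj, mem_univ j⟩)
            omega
          omega
        simp [Pi.single_eq_of_ne hj, hfj]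
    · rintro ⟨i, rfl⟩
      exact ⟨by simp [Finset.sum_pi_single'], i, by simp⟩
  have hone : ∀ i : Fin n, t (Pi.single i p) = 1 := by
    intro i
    have e1 : (∏ j, (((Pi.single i p : Fin n → ℕ) j).factorial : ℚ)) = (p.factorial : ℚ) := by
      rw [Finset.prod_eq_single i]
      · simp
      · intro j _ hj; simp [Pi.single_eq_of_ne hj]
      · simp
    have e2 : (∏ j, ((((Pi.single i p : Fin n → ℕ) j) + ν).factorial : ℚ))
        = ((p + ν).factorial : ℚ) * ((ν.factorial : ℚ)) ^ (n - 1) := by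
      rw [← Finset.mul_prod_erase univ _ (Finset.mem_univ i)]
      congr 1
      · simp
      · rw [Finset.prod_congr rfl (fun j hj => ?_), Finset.prod_const,
          Finset.card_erase_of_mem (mem_univ i), Finset.card_univ, Fintype.card_fin]
        have hji : j ≠ i := (Finset.mem_erase.mp hj).1
        simp [Pi.single_eq_of_ne hji]
    rw [ht]
    simp only [e1, e2]
    rw [show (p.factorial:ℚ) * ((p + ν).factorial:ℚ) * ((ν.factorial:ℚ)) ^ (n-1)
          = (p.factorial:ℚ) * (((p + ν).factorial:ℚ) * ((ν.factorial:ℚ)) ^ (n-1)) by ring,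
        div_self]
    positivity
  have hEsum : ∑ f ∈ S.filter (fun f => ∃ i, f i = p), t f = (n : ℚ) := by
    rw [hfilter, Finset.sum_image (fun x _ y _ h => hinj h)]
    simp [hone]
  have hsplit : W n ν p - (n : ℚ)
      = ∑ f ∈ S.filter (fun f => ¬ ∃ i, f i = p), t f := by
    have := Finset.sum_filter_add_sum_filter_not S (fun f => ∃ i, f i = p) t
    rw [hW, ← this, hEsum]; ring
  rw [hsplit]
  refine Finset.sum_induction t
    (fun x => ∃ a b : ℤ, ¬ (p : ℤ) ∣ b ∧ x = (p : ℚ) * ((a : ℚ) / (b : ℚ)))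
    ?_ ?_ ?_
  · rintro x y ⟨a, b, hb, hx⟩ ⟨c, d, hd, hy⟩
    refine ⟨a * d + c * b, b * d, ?_, ?_⟩
    · intro h
      rcases (Int.Prime.dvd_mul' hp h) with h' | h'
      · exact hb h'
      · exact hd h'
    · have hb0 : (b : ℚ) ≠ 0 := by
        intro h0; apply hb
        have : b = 0 := by exact_mod_cast h0
        simp [this]
      have hd0 : (d : ℚ) ≠ 0 := by
        intro h0; apply hd
        have : d = 0 := by exact_mod_cast h0
        simp [this]
      rw [hx, hy]
      push_cast
      field_simp
  · refine ⟨0, 1, ?_, by simp⟩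
    intro hdvd
    have := Int.le_of_dvd one_pos hdvd
    have : (2:ℤ) ≤ p := by exact_mod_cast h2
    omega
  · intro f hf
    rw [Finset.mem_filter] at hf
    obtain ⟨hfS, hnp⟩ := hf
    push_neg at hnp
    have hsum : ∑ i, f i = p := Finset.Nat.mem_antidiagonalTuple.mp hfS
    exact term_padic hp hν f hsum hnp
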